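/- Let Q be a (not necessarily unital) associative ring and let B be an additive subgroup of Q. Then the following are equivalent: (i) BQB ⊆ B and B² = 0 (i.e., b·x·b' ∈ B and b·b' = 0 for all b, b' ∈ B, x ∈ Q); (ii) there exist a left ideal L of Q and a right ideal R of Q such that RL ⊆ B ⊆ R ∩ L and LR = 0 (i.e., r·l ∈ B for all r ∈ R, l ∈ L, and l·r = 0 for all l ∈ L, r ∈ R). -/

import Mathlib

/-- A right ideal of a (not necessarily unital) ring: an additive subgroup `R` with `RQ ⊆ R`. -/
def IsRightIdeal {Q : Type*} [NonUnitalRing Q] (R : AddSubgroup Q) : Prop :=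
  ∀ r ∈ R, ∀ x : Q, r * x ∈ R

/-- A left ideal of a (not necessarily unital) ring: an additive subgroup `L` with `QL ⊆ L`. -/
def IsLeftIdeal {Q : Type*} [NonUnitalRing Q] (L : AddSubgroup Q) : Prop :=
  ∀ l ∈ L, ∀ x : Q, x * l ∈ L

/-- Proposition 3.5: for an additive subgroup `B` of `Q`, `BQB ⊆ B` and `B² = 0` hold if and
only if there are a left ideal `L` and a right ideal `R` with `RL ⊆ B ⊆ R ∩ L` and `LR = 0`. -/
theorem regular_inner_ideal_iff {Q : Type*} [NonUnitalRing Q] (B : AddSubgroup Q) :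
    ((∀ b ∈ B, ∀ x : Q, ∀ b' ∈ B, b * x * b' ∈ B) ∧ (∀ b ∈ B, ∀ b' ∈ B, b * b' = 0)) ↔
    (∃ L R : AddSubgroup Q, IsLeftIdeal L ∧ IsRightIdeal R ∧
      (∀ r ∈ R, ∀ l ∈ L, r * l ∈ B) ∧ (B : Set Q) ⊆ (R : Set Q) ∩ (L : Set Q) ∧
      (∀ l ∈ L, ∀ r ∈ R, l * r = 0)) := by
  constructor
  · rintro ⟨h1, h2⟩
    set SL : Set Q := (B : Set Q) ∪ {z | ∃ b ∈ B, ∃ x : Q, z = x * b} with hSL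
    set SR : Set Q := (B : Set Q) ∪ {z | ∃ b ∈ B, ∃ x : Q, z = b * x} with hSR
    refine ⟨AddSubgroup.closure SL, AddSubgroup.closure SR, ?_, ?_, ?_, ?_, ?_⟩
    · -- left ideal
      intro l hl x
      induction hl using AddSubgroup.closure_induction with
      | mem z hz =>
          apply AddSubgroup.subset_closure
          rcases hz with hz | ⟨b, hb, y, rfl⟩
          · exact Or.inr ⟨z, hz, x, rfl⟩
          · exact Or.inr ⟨b, hb, x * y, (mul_assoc x y b).symm⟩
      | zero => simpa using (AddSubgroup.closure SL).zero_mem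
      | add a b _ _ ha hb => simpa [mul_add] using add_mem ha hb
      | neg a _ ha => simpa [mul_neg] using neg_mem ha
    · -- right ideal
      intro r hr x
      induction hr using AddSubgroup.closure_induction with
      | mem z hz =>
          apply AddSubgroup.subset_closure
          rcases hz with hz | ⟨b, hb, y, rfl⟩
          · exact Or.inr ⟨z, hz, x, rfl⟩
          · exact Or.inr ⟨b, hb, y * x, mul_assoc b y x⟩
      | zero => simpa using (AddSubgroup.closure SR).zero_mem
      | add a b _ _ ha hb => simpa [add_mul] using add_mem ha hb
      | neg a _ ha => simpa [neg_mul] using neg_mem ha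
    · -- RL ⊆ B
      intro r hr l hl
      induction hr using AddSubgroup.closure_induction with
      | mem z hz =>
          induction hl using AddSubgroup.closure_induction with
          | mem w hw =>
              rcases hz with hz | ⟨b, hb, x, rfl⟩ <;>
                rcases hw with hw | ⟨b', hb', y, rfl⟩
              · simpa [h2 z hz w hw] using B.zero_mem
              · have := h1 z hz y b' hb'
                simpa [mul_assoc] using this
              · exact h1 b hb x w hw
              · have := h1 b hb (x * y) b' hb'
                simpa [mul_assoc] using this
          | zero => simpa using B.zero_mem
          | add a b _ _ ha hb => simpa [mul_add] using add_mem ha hb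
          | neg a _ ha => simpa [mul_neg] using neg_mem ha
      | zero => simpa using B.zero_mem
      | add a b _ _ ha hb => simpa [add_mul] using add_mem ha hb
      | neg a _ ha => simpa [neg_mul] using neg_mem ha
    · -- B ⊆ R ∩ L
      intro b hb
      exact ⟨AddSubgroup.subset_closure (Or.inl hb),
        AddSubgroup.subset_closure (Or.inl hb)⟩
    · -- LR = 0
      intro l hl r hr
      induction hl using AddSubgroup.closure_induction with
      | mem z hz =>
          induction hr using AddSubgroup.closure_induction with
          | mem w hw =>
              rcases hz with hz | ⟨b, hb, x, rfl⟩ <;>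
                rcases hw with hw | ⟨b', hb', y, rfl⟩
              · exact h2 z hz w hw
              · rw [← mul_assoc, h2 z hz b' hb', zero_mul]
              · rw [mul_assoc, h2 b hb w hw, mul_zero]
              · rw [mul_assoc, ← mul_assoc b b' y, h2 b hb b' hb', zero_mul, mul_zero]
          | zero => simp
          | add a b _ _ ha hb => simp [mul_add, ha, hb]
          | neg a _ ha => simp [mul_neg, ha]
      | zero => simp
      | add a b _ _ ha hb => simp [add_mul, ha, hb]
      | neg a _ ha => simp [neg_mul, ha]
  · rintro ⟨L, R, hL, hR, hRL, hB, hLR⟩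
    refine ⟨fun b hb x b' hb' => ?_, fun b hb b' hb' => ?_⟩
    · exact hRL _ (hR b (hB hb).1 x) b' (hB hb').2
    · exact hLR b (hB hb).2 b' (hB hb').1
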